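/- For every integer p ≥ 2, the negative continued fraction [2, …, 2, 3, 2, 2]⁻, whose first p−2 entries equal 2 followed by the entries 3, 2, 2, equals (4p−1)/(4p−5). -/
import Mathlib


/-- Negative continued fraction: `ncf [a₁,…,a_k] = a₁ - 1/ncf [a₂,…,a_k]` and `ncf [a] = a`
(it is well-defined provided every proper suffix has nonzero value; otherwise the
junk value `1/0 = 0` of ℚ is used). -/
def ncf : List ℤ → ℚ
  | [] => 0
  | a :: l => (a : ℚ) - 1 / ncf l

/-- [2,…,2,3,2,2]⁻ with p−2 leading 2's equals (4p−1)/(4p−5). -/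
theorem stmt_10 (p : ℕ) (hp : 2 ≤ p) :
    ncf (List.replicate (p - 2) (2 : ℤ) ++ [3, 2, 2]) =
      (4 * (p : ℚ) - 1) / (4 * (p : ℚ) - 5) := by
  obtain ⟨n, rfl⟩ : ∃ n, p = n + 2 := ⟨p - 2, by omega⟩
  simp only [Nat.add_sub_cancel]
  have key : ∀ n : ℕ, ncf (List.replicate n (2 : ℤ) ++ [3, 2, 2]) =
      (4 * (n : ℚ) + 7) / (4 * (n : ℚ) + 3) := by
    intro n
    induction n with
    | zero => norm_num [ncf]
    | succ k ih =>
      rw [List.replicate_succ, List.cons_append, ncf, ih]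
      have h3 : (4 * (k : ℚ) + 3) ≠ 0 := by positivity
      have h7 : (4 * (k : ℚ) + 7) ≠ 0 := by positivity
      push_cast
      field_simp
      ring
  rw [key n]
  push_cast
  ring_nf
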